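/- For z ∈ ℂ with Re z > 0, the Fourier transform of the Bessel potential kernel G_z(x) = Γ(z/2)^{-1} ∫_0^∞ (4πt)^{-d/2} e^{-|x|²/(4t)} e^{-t} t^{z/2} dt/t satisfies 𝓕G_z(ξ) = (1 + |ξ|²)^{-z/2} for all ξ ∈ ℝ^d. -/

import Mathlib

open MeasureTheory Set Complex Real

/-- The Bessel potential kernel
`G_z(x) = Γ(z/2)⁻¹ ∫_0^∞ (4πt)^{-d/2} e^{-|x|²/4t} e^{-t} t^{z/2} dt/t` on `ℝ^d`. -/
noncomputable def besselPotential (d : ℕ) (z : ℂ) (x : EuclideanSpace ℝ (Fin d)) : ℂ :=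
  (Complex.Gamma (z / 2))⁻¹ *
    ∫ t in Ioi (0 : ℝ),
      (((4 * π * t) ^ (-(d : ℝ) / 2) * Real.exp (-‖x‖ ^ 2 / (4 * t)) * Real.exp (-t) : ℝ) : ℂ)
        * (t : ℂ) ^ (z / 2) / (t : ℂ)

theorem stmt5 (d : ℕ) (z : ℂ) (hz : 0 < z.re) (ξ : EuclideanSpace ℝ (Fin d)) :
    ∫ x : EuclideanSpace ℝ (Fin d),
        besselPotential d z x * Complex.exp (-Complex.I * ((inner ℝ x ξ : ℝ))) =
      ((1 : ℂ) + (‖ξ‖ ^ 2 : ℝ)) ^ (-z / 2) := by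
  have hπ : (0:ℝ) < π := Real.pi_pos
  have hre : (z / 2).re = z.re / 2 := by
    rw [show ((2:ℂ)) = ((2:ℝ):ℂ) by norm_num, Complex.div_ofReal_re]
  have hz2 : 0 < (z / 2).re := by rw [hre]; positivity
  set r : ℝ := 1 + ‖ξ‖ ^ 2 with hrdef
  have hr0 : 0 < r := by positivity
  set f : ℝ → EuclideanSpace ℝ (Fin d) → ℂ := fun t x =>
    (((4 * π * t) ^ (-(d : ℝ) / 2) * Real.exp (-‖x‖ ^ 2 / (4 * t)) * Real.exp (-t) : ℝ) : ℂ)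
      * (t : ℂ) ^ (z / 2) / (t : ℂ) * Complex.exp (-Complex.I * ((inner ℝ x ξ : ℝ))) with hfdef
  have hb : ∀ t : ℝ, 0 < t → 0 < (((1 / (4 * t) : ℝ)) : ℂ).re := by
    intro t ht; rw [Complex.ofReal_re]; positivity
  -- rewrite the integrand in Gaussian form
  have hf_eq : ∀ t : ℝ, 0 < t → ∀ x : EuclideanSpace ℝ (Fin d), f t x =
      ((((4 * π * t) ^ (-(d : ℝ) / 2) * Real.exp (-t) : ℝ) : ℂ) * ((t : ℂ) ^ (z / 2) / (t : ℂ)))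
        * Complex.exp (-(((1 / (4 * t) : ℝ)) : ℂ) * ‖x‖ ^ 2
            + (-Complex.I) * ((inner ℝ ξ x : ℝ) : ℂ)) := by
    intro t ht x
    have h1 : ((Real.exp (-‖x‖ ^ 2 / (4 * t)) : ℝ) : ℂ)
        = Complex.exp (-(((1 / (4 * t) : ℝ)) : ℂ) * (‖x‖ : ℂ) ^ 2) := by
      rw [Complex.ofReal_exp]; congr 1; push_cast; ring
    have h2 : ((inner ℝ x ξ : ℝ) : ℂ) = ((inner ℝ ξ x : ℝ) : ℂ) := by
      rw [real_inner_comm]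
    simp only [hfdef, Complex.ofReal_mul, h1, h2, Complex.exp_add]
    ring
  -- the inner (Gaussian) integral
  have key : ∀ t ∈ Ioi (0:ℝ), (∫ x : EuclideanSpace ℝ (Fin d), f t x)
      = (t : ℂ) ^ (z / 2 - 1) * Complex.exp (-((r : ℂ) * (t : ℂ))) := by
    intro t ht
    have ht' : (0:ℝ) < t := ht
    have ht0 : (t:ℂ) ≠ 0 := Complex.ofReal_ne_zero.mpr ht'.ne'
    have h4πt : (0:ℝ) < 4 * π * t := by positivity
    simp_rw [hf_eq t ht']
    rw [MeasureTheory.integral_const_mul]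
    rw [GaussianFourier.integral_cexp_neg_mul_sq_norm_add_of_euclideanSpace (hb t ht')
      (-Complex.I) ξ]
    have e1 : ((π:ℂ) / (((1 / (4 * t) : ℝ)) : ℂ)) = ((4 * π * t : ℝ) : ℂ) := by
      push_cast; field_simp
    have e2 : (((4 * π * t) ^ (-(d:ℝ)/2) : ℝ) : ℂ)
        = ((4 * π * t : ℝ) : ℂ) ^ ((-(d:ℝ)/2 : ℝ) : ℂ) := Complex.ofReal_cpow h4πt.le _
    have e3 : ((4 * π * t : ℝ) : ℂ) ^ ((-(d:ℝ)/2 : ℝ) : ℂ)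
        * ((4 * π * t : ℝ) : ℂ) ^ ((Fintype.card (Fin d) : ℂ) / 2) = 1 := by
      rw [← Complex.cpow_add _ _ (Complex.ofReal_ne_zero.mpr h4πt.ne')]
      rw [show ((-(d:ℝ)/2 : ℝ) : ℂ) + ((Fintype.card (Fin d) : ℂ) / 2) = 0 by
        simp [Fintype.card_fin]; ring]
      exact Complex.cpow_zero _
    have e4 : Complex.exp (((-t : ℝ) : ℂ)) * Complex.exp ((-Complex.I) ^ 2 * (‖ξ‖:ℂ) ^ 2
          / (4 * (((1 / (4 * t) : ℝ)) : ℂ))) = Complex.exp (-((r : ℂ) * (t : ℂ))) := by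
      rw [← Complex.exp_add]
      congr 1
      rw [show (-Complex.I) ^ 2 = -1 by rw [neg_sq, Complex.I_sq]]
      rw [hrdef]
      push_cast
      field_simp
      ring
    have e5 : (t : ℂ) ^ (z / 2 - 1) = (t : ℂ) ^ (z / 2) / (t : ℂ) := by
      rw [Complex.cpow_sub _ _ ht0, Complex.cpow_one]
    rw [e1, Complex.ofReal_mul, e2, Complex.ofReal_exp, e5]
    linear_combination ((t:ℂ) ^ (z / 2) / (t:ℂ)) * Complex.exp (((-t : ℝ) : ℂ))
        * Complex.exp ((-Complex.I) ^ 2 * (‖ξ‖:ℂ) ^ 2 / (4 * (((1 / (4 * t) : ℝ)) : ℂ))) * e3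
      + ((t:ℂ) ^ (z / 2) / (t:ℂ)) * e4
  -- the norm integral
  have key2 : ∀ t ∈ Ioi (0:ℝ), (∫ x : EuclideanSpace ℝ (Fin d), ‖f t x‖)
      = Real.exp (-t) * t ^ (z.re / 2 - 1) := by
    intro t ht
    have ht' : (0:ℝ) < t := ht
    have h4πt : (0:ℝ) < 4 * π * t := by positivity
    have hnorm : ∀ x : EuclideanSpace ℝ (Fin d), ‖f t x‖
        = ((4 * π * t) ^ (-(d:ℝ)/2) * Real.exp (-t) * t ^ (z.re / 2) / t)
          * Real.exp (-(1 / (4 * t)) * ‖x‖ ^ 2) := by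
      intro x
      simp only [hfdef]
      rw [norm_mul, norm_div, norm_mul]
      rw [Complex.norm_real, Complex.norm_real]
      rw [Complex.norm_cpow_eq_rpow_re_of_pos ht']
      rw [Complex.norm_exp]
      have hA : ((4 * π * t) ^ (-(d:ℝ)/2) * Real.exp (-‖x‖ ^ 2 / (4 * t)) * Real.exp (-t)) ≥ 0 := by
        positivity
      rw [Real.norm_eq_abs, _root_.abs_of_nonneg hA, Real.norm_eq_abs, abs_of_pos ht']
      rw [show (-Complex.I * ((inner ℝ x ξ : ℝ) : ℂ)).re = 0 by simp, Real.exp_zero, mul_one]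
      rw [hre]
      rw [show -‖x‖ ^ 2 / (4 * t) = -(1 / (4 * t)) * ‖x‖ ^ 2 by ring]
      ring
    simp_rw [hnorm]
    rw [MeasureTheory.integral_const_mul]
    rw [GaussianFourier.integral_rexp_neg_mul_sq_norm (by positivity : (0:ℝ) < 1 / (4 * t))]
    rw [finrank_euclideanSpace_fin]
    rw [show (π / (1 / (4 * t))) = 4 * π * t by field_simp]
    have hcancel : (4 * π * t) ^ (-(d:ℝ)/2) * (4 * π * t) ^ ((d:ℝ)/2) = 1 := by
      rw [← Real.rpow_add h4πt, show -(d:ℝ)/2 + (d:ℝ)/2 = 0 by ring, Real.rpow_zero]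
    have hts : t ^ (z.re / 2) / t = t ^ (z.re / 2 - 1) := by
      rw [Real.rpow_sub ht', Real.rpow_one]
    calc (4 * π * t) ^ (-(d:ℝ)/2) * Real.exp (-t) * t ^ (z.re / 2) / t
          * (4 * π * t) ^ ((d:ℝ)/2)
        = ((4 * π * t) ^ (-(d:ℝ)/2) * (4 * π * t) ^ ((d:ℝ)/2))
          * (Real.exp (-t) * (t ^ (z.re / 2) / t)) := by ring
      _ = Real.exp (-t) * t ^ (z.re / 2 - 1) := by rw [hcancel, hts, one_mul]
  -- continuity / measurability
  have hcont : ContinuousOn (Function.uncurry f) (Ioi (0:ℝ) ×ˢ (univ : Set (EuclideanSpace ℝ (Fin d)))) := by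
    have hne : ∀ p : ℝ × EuclideanSpace ℝ (Fin d), p ∈ Ioi (0:ℝ) ×ˢ (univ : Set (EuclideanSpace ℝ (Fin d))) → (4 * π * p.1 : ℝ) ≠ 0 := by
      intro p hp
      have : (0:ℝ) < p.1 := hp.1
      positivity
    have hc1 : ContinuousOn (fun p : ℝ × EuclideanSpace ℝ (Fin d) =>
        ((4 * π * p.1) ^ (-(d : ℝ) / 2) : ℝ)) (Ioi (0:ℝ) ×ˢ univ) :=
      ((continuous_const.mul continuous_fst).continuousOn).rpow_const
        (fun p hp => Or.inl (hne p hp))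
    have hc2 : ContinuousOn (fun p : ℝ × EuclideanSpace ℝ (Fin d) =>
        Real.exp (-‖p.2‖ ^ 2 / (4 * p.1))) (Ioi (0:ℝ) ×ˢ univ) := by
      apply Real.continuous_exp.comp_continuousOn
      refine ContinuousOn.div ((continuous_snd.norm.pow 2).neg.continuousOn)
        ((continuous_const.mul continuous_fst).continuousOn) ?_
      intro p hp
      have : (0:ℝ) < p.1 := hp.1
      positivity
    have hc3 : Continuous (fun p : ℝ × EuclideanSpace ℝ (Fin d) => Real.exp (-p.1)) :=
      Real.continuous_exp.comp continuous_fst.neg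
    have hA : ContinuousOn (fun p : ℝ × EuclideanSpace ℝ (Fin d) =>
        ((((4 * π * p.1) ^ (-(d : ℝ) / 2) * Real.exp (-‖p.2‖ ^ 2 / (4 * p.1))
          * Real.exp (-p.1) : ℝ)) : ℂ)) (Ioi (0:ℝ) ×ˢ univ) :=
      Complex.continuous_ofReal.comp_continuousOn ((hc1.mul hc2).mul hc3.continuousOn)
    have hc4 : ContinuousOn (fun p : ℝ × EuclideanSpace ℝ (Fin d) =>
        ((p.1 : ℂ)) ^ (z / 2)) (Ioi (0:ℝ) ×ˢ univ) := by
      intro p hp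
      apply ContinuousAt.continuousWithinAt
      have h1 : ContinuousAt (fun y : ℂ => y ^ (z / 2)) ((p.1 : ℝ) : ℂ) :=
        continuousAt_cpow_const (Complex.ofReal_mem_slitPlane.mpr hp.1)
      have h2 : ContinuousAt (fun q : ℝ × EuclideanSpace ℝ (Fin d) => ((q.1 : ℝ) : ℂ)) p :=
        (Complex.continuous_ofReal.comp continuous_fst).continuousAt
      exact ContinuousAt.comp (x := p) h1 h2
    have hc5 : ContinuousOn (fun p : ℝ × EuclideanSpace ℝ (Fin d) =>
        ((p.1 : ℂ))) (Ioi (0:ℝ) ×ˢ univ) :=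
      (Complex.continuous_ofReal.comp continuous_fst).continuousOn
    have hc6 : Continuous (fun p : ℝ × EuclideanSpace ℝ (Fin d) =>
        Complex.exp (-Complex.I * ((inner ℝ p.2 ξ : ℝ) : ℂ))) :=
      Complex.continuous_exp.comp (continuous_const.mul
        (Complex.continuous_ofReal.comp (continuous_snd.inner continuous_const)))
    have hd : ∀ p : ℝ × EuclideanSpace ℝ (Fin d), p ∈ Ioi (0:ℝ) ×ˢ (univ : Set (EuclideanSpace ℝ (Fin d))) → ((p.1 : ℂ)) ≠ 0 := by
      intro p hp
      exact Complex.ofReal_ne_zero.mpr (ne_of_gt hp.1)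
    exact (((hA.mul hc4).div hc5 hd).mul hc6.continuousOn)
  have hmeas : AEStronglyMeasurable (Function.uncurry f)
      ((volume.restrict (Ioi (0:ℝ))).prod (volume : Measure (EuclideanSpace ℝ (Fin d)))) := by
    rw [Measure.restrict_prod_eq_prod_univ]
    exact hcont.aestronglyMeasurable (measurableSet_Ioi.prod MeasurableSet.univ)
  -- integrability on the product
  have hint : Integrable (Function.uncurry f)
      ((volume.restrict (Ioi (0:ℝ))).prod (volume : Measure (EuclideanSpace ℝ (Fin d)))) := by
    rw [MeasureTheory.integrable_prod_iff hmeas]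
    constructor
    · filter_upwards [ae_restrict_mem measurableSet_Ioi] with t ht
      have hI := GaussianFourier.integrable_cexp_neg_mul_sq_norm_add_of_euclideanSpace
        (hb t ht) (-Complex.I) ξ
      exact (hI.const_mul _).congr (ae_of_all _ fun x => (hf_eq t ht x).symm)
    · refine (Real.GammaIntegral_convergent (by positivity : (0:ℝ) < z.re / 2)).congr ?_
      filter_upwards [ae_restrict_mem measurableSet_Ioi] with t ht
      exact (key2 t ht).symm
  -- put everything together
  have step1 : (∫ x : EuclideanSpace ℝ (Fin d),
      besselPotential d z x * Complex.exp (-Complex.I * ((inner ℝ x ξ : ℝ))))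
      = (Complex.Gamma (z / 2))⁻¹ * ∫ x : EuclideanSpace ℝ (Fin d), ∫ t in Ioi (0:ℝ), f t x := by
    rw [← MeasureTheory.integral_const_mul]
    refine integral_congr_ae (ae_of_all _ fun x => ?_)
    simp only [besselPotential, hfdef, mul_assoc]
    rw [← MeasureTheory.integral_mul_const]
  rw [step1, ← MeasureTheory.integral_integral_swap hint]
  rw [setIntegral_congr_fun measurableSet_Ioi key]
  rw [integral_cpow_mul_exp_neg_mul_Ioi hz2 hr0]
  have hΓ : Complex.Gamma (z / 2) ≠ 0 := Complex.Gamma_ne_zero_of_re_pos hz2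
  rw [mul_comm ((1 / (r:ℂ)) ^ (z / 2)) (Complex.Gamma (z / 2)), ← mul_assoc,
    inv_mul_cancel₀ hΓ, one_mul]
  rw [show ((1 : ℂ) + ((‖ξ‖ ^ 2 : ℝ) : ℂ)) = ((r : ℝ) : ℂ) by rw [hrdef]; push_cast; ring]
  rw [one_div, Complex.inv_cpow _ _ (by
    rw [Complex.arg_ofReal_of_nonneg hr0.le]; exact Ne.symm Real.pi_ne_zero),
    ← Complex.cpow_neg, neg_div]
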